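/- For every real m × n matrix A, lindisc(A) ≤ 2·herdisc(A). -/
import Mathlib


open Finset

noncomputable def sg (b : Bool) : ℝ := if b then 1 else -1

lemma sg_abs (b : Bool) : |sg b| = 1 := by cases b <;> simp [sg]

lemma key_lemma (m n : ℕ) (A : Matrix (Fin m) (Fin n) ℝ) (D : ℝ) (hD0 : 0 ≤ D)
    (hD : ∀ J : Finset (Fin n), ∃ ε : Fin n → Bool,
      ∀ i, |∑ j ∈ J, A i j * sg (ε j)| ≤ D) :
    ∀ k : ℕ, ∀ β : Fin n → ℝ, (∀ j, |β j| ≤ 1) →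
      (∀ j, ∃ t : ℤ, β j * 2 ^ k = t) →
      ∃ b : Fin n → Bool, ∀ i,
        |∑ j, A i j * (β j - sg (b j))| ≤ (2 - (1/2 : ℝ) ^ k) * D := by
  classical
  intro k
  induction k with
  | zero =>
    intro β hβ hdy
    set J : Finset (Fin n) := univ.filter (fun j => β j = 0) with hJ
    obtain ⟨ε, hε⟩ := hD J
    refine ⟨fun j => if β j = 0 then ε j else if β j = 1 then true else false, fun i => ?_⟩
    have hsum : ∑ j, A i j * (β j - sg (if β j = 0 then ε j else if β j = 1 then true else false))
        = -∑ j ∈ J, A i j * sg (ε j) := by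
      rw [← Finset.sum_neg_distrib]
      rw [← Finset.sum_subset (Finset.subset_univ J)]
      · refine Finset.sum_congr rfl fun j hj => ?_
        have h0 : β j = 0 := by simpa [hJ] using hj
        simp [h0]
      · intro j _ hj
        have h0 : β j ≠ 0 := by simpa [hJ] using hj
        obtain ⟨t, ht⟩ := hdy j
        rw [pow_zero, mul_one] at ht
        have htabs : |(t : ℝ)| ≤ 1 := ht ▸ hβ j
        have hb : |t| ≤ 1 := by exact_mod_cast htabs
        rw [abs_le] at hb
        obtain ⟨hb1, hb2⟩ := hb
        interval_cases t
        · have h1 : β j = -1 := by rw [ht]; norm_num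
          have h1' : β j ≠ 1 := by rw [h1]; norm_num
          norm_num [h0, h1, h1', sg]
        · exact absurd (by simpa using ht) h0
        · have h1 : β j = 1 := by rw [ht]; norm_num
          simp [h0, h1, sg]
    rw [hsum, abs_neg, pow_zero]
    calc |∑ j ∈ J, A i j * sg (ε j)| ≤ D := hε i
      _ ≤ (2 - 1) * D := by linarith
  | succ k ih =>
    intro β hβ hdy
    set J : Finset (Fin n) := univ.filter (fun j => ¬ ∃ s : ℤ, β j * 2 ^ k = s) with hJ
    obtain ⟨ε, hε⟩ := hD J
    set β' : Fin n → ℝ := fun j => if j ∈ J then β j - (1/2 : ℝ) ^ (k+1) * sg (ε j) else β j with hβ'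
    have h12 : ((1/2:ℝ))^(k+1) * 2^(k+1) = 1 := by rw [← mul_pow]; norm_num
    have hodd : ∀ j ∈ J, ∃ t : ℤ, β j * 2 ^ (k+1) = t ∧ Odd t := by
      intro j hj
      obtain ⟨t, ht⟩ := hdy j
      refine ⟨t, ht, ?_⟩
      rcases Int.even_or_odd t with he | ho
      · exfalso
        obtain ⟨s, hs⟩ := he
        have hmem : ¬ ∃ s : ℤ, β j * 2 ^ k = s := by simpa [hJ] using hj
        refine hmem ⟨s, ?_⟩
        have h2 : β j * 2 ^ (k+1) = (β j * 2 ^ k) * 2 := by ring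
        have h3 : (β j * 2 ^ k) * 2 = (s : ℝ) * 2 := by
          rw [← h2, ht, hs]; push_cast; ring
        linarith
      · exact ho
    have hβ'bound : ∀ j, |β' j| ≤ 1 := by
      intro j
      by_cases hj : j ∈ J
      · obtain ⟨t, ht, hto⟩ := hodd j hj
        have h2pos : (0:ℝ) < 2 ^ (k+1) := by positivity
        have htle : |(t:ℝ)| ≤ 2 ^ (k+1) := by
          rw [← ht, abs_mul, abs_pow, abs_two]
          calc |β j| * 2 ^ (k+1) ≤ 1 * 2^(k+1) :=
                mul_le_mul_of_nonneg_right (hβ j) (le_of_lt h2pos)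
            _ = 2 ^ (k+1) := one_mul _
        have htleZ : |t| ≤ 2 ^ (k+1) := by exact_mod_cast htle
        have htne : |t| ≠ 2 ^ (k+1) := by
          obtain ⟨c, hc⟩ := hto
          have hq : (2:ℤ)^(k+1) = 2 * 2^k := by ring
          intro h
          rcases (abs_eq (by positivity : (0:ℤ) ≤ 2^(k+1))).mp h with h1 | h1 <;>
            (rw [hq] at h1; set q : ℤ := 2^k; omega)
        have htlt : |(t:ℝ)| + 1 ≤ 2 ^ (k+1) := by
          have h2 : |t| + 1 ≤ 2 ^ (k+1) := by omega
          calc |(t:ℝ)| + 1 = ((|t| + 1 : ℤ) : ℝ) := by push_cast; ring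
            _ ≤ (((2:ℤ) ^ (k+1) : ℤ) : ℝ) := by exact_mod_cast h2
            _ = 2 ^ (k+1) := by push_cast; ring
        have hval : β' j = ((t:ℝ) - sg (ε j)) / 2 ^ (k+1) := by
          simp only [hβ', if_pos hj]
          rw [eq_div_iff (ne_of_gt h2pos)]
          calc (β j - (1/2:ℝ)^(k+1) * sg (ε j)) * 2^(k+1)
              = β j * 2^(k+1) - sg (ε j) * ((1/2:ℝ)^(k+1) * 2^(k+1)) := by ring
            _ = (t:ℝ) - sg (ε j) := by rw [ht, h12, mul_one]
        rw [hval, abs_div, abs_pow, abs_two, div_le_one h2pos]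
        calc |(t:ℝ) - sg (ε j)| ≤ |(t:ℝ)| + |sg (ε j)| := abs_sub _ _
          _ = |(t:ℝ)| + 1 := by rw [sg_abs]
          _ ≤ 2 ^ (k+1) := htlt
      · simp only [hβ', if_neg hj]; exact hβ j
    have hβ'dy : ∀ j, ∃ s : ℤ, β' j * 2 ^ k = s := by
      intro j
      by_cases hj : j ∈ J
      · obtain ⟨t, ht, hto⟩ := hodd j hj
        set e : ℤ := if ε j then 1 else -1 with he
        have hse : sg (ε j) = (e : ℝ) := by by_cases hεj : ε j <;> simp [sg, he, hεj]
        have hte : Even (t - e) := by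
          obtain ⟨c, hc⟩ := hto
          by_cases hεj : ε j
          · have he1 : e = 1 := by simp [he, hεj]
            exact ⟨c, by omega⟩
          · have he1 : e = -1 := by simp [he, hεj]
            exact ⟨c + 1, by omega⟩
        obtain ⟨s, hs⟩ := hte
        refine ⟨s, ?_⟩
        have h2 : β' j * 2 ^ (k+1) = (t : ℝ) - e := by
          simp only [hβ', if_pos hj]
          calc (β j - (1/2:ℝ)^(k+1) * sg (ε j)) * 2^(k+1)
              = β j * 2^(k+1) - sg (ε j) * ((1/2:ℝ)^(k+1) * 2^(k+1)) := by ring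
            _ = (t:ℝ) - e := by rw [ht, h12, mul_one, hse]
        have h3 : β' j * 2 ^ k * 2 = (s : ℝ) * 2 := by
          have h4 : β' j * 2 ^ k * 2 = β' j * 2 ^ (k+1) := by ring
          rw [h4, h2]
          have : (t : ℝ) - e = ((t - e : ℤ) : ℝ) := by push_cast; ring
          rw [this, hs]; push_cast; ring
        linarith
      · have hmem : ∃ s : ℤ, β j * 2 ^ k = s := by
          by_contra h
          exact hj (Finset.mem_filter.mpr ⟨Finset.mem_univ j, h⟩)
        simpa [hβ', if_neg hj] using hmem
    obtain ⟨b, hb⟩ := ih β' hβ'bound hβ'dy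
    refine ⟨b, fun i => ?_⟩
    have hsplit : ∑ j, A i j * (β j - sg (b j))
        = (∑ j ∈ J, A i j * sg (ε j)) * (1/2:ℝ)^(k+1) + ∑ j, A i j * (β' j - sg (b j)) := by
      have h1 : ∀ j, A i j * (β j - sg (b j))
          = A i j * (β j - β' j) + A i j * (β' j - sg (b j)) := by intro j; ring
      rw [Finset.sum_congr rfl (fun j _ => h1 j), Finset.sum_add_distrib]
      congr 1
      rw [Finset.sum_mul, ← Finset.sum_subset (Finset.subset_univ J)]
      · refine Finset.sum_congr rfl fun j hj => ?_
        simp only [hβ', if_pos hj]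
        ring
      · intro j _ hj
        simp [hβ', if_neg hj]
    rw [hsplit]
    have hhalf : (0:ℝ) < (1/2:ℝ)^(k+1) := by positivity
    calc |(∑ j ∈ J, A i j * sg (ε j)) * (1/2:ℝ)^(k+1) + ∑ j, A i j * (β' j - sg (b j))|
        ≤ |(∑ j ∈ J, A i j * sg (ε j)) * (1/2:ℝ)^(k+1)| + |∑ j, A i j * (β' j - sg (b j))| :=
          abs_add_le _ _
      _ = |∑ j ∈ J, A i j * sg (ε j)| * (1/2:ℝ)^(k+1) + |∑ j, A i j * (β' j - sg (b j))| := by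
          rw [abs_mul, abs_of_pos hhalf]
      _ ≤ D * (1/2:ℝ)^(k+1) + (2 - (1/2:ℝ)^k) * D := by
          gcongr
          · exact hε i
          · exact hb i
      _ = (2 - (1/2:ℝ)^(k+1)) * D := by ring

/-- **Beck–Spencer / Lovász–Spencer–Vesztergombi:** `lindisc(A) ≤ 2 herdisc(A)`
for every real `m × n` matrix `A`. Here
`lindisc(A) = sup_{β ∈ [−1,1]^n} inf_{b ∈ {−1,1}^n} ‖A(β−b)‖_∞` and
`herdisc(A) = sup_{J ⊆ {1,…,n}} inf_{b ∈ {−1,1}^J} ‖(A|_J) b‖_∞`, with sign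
vectors encoded by `ε : Fin n → Bool` (`true` ↦ `1`, `false` ↦ `−1`). -/
theorem lindisc_le_two_herdisc
    (m n : ℕ) (A : Matrix (Fin m) (Fin n) ℝ) :
    (⨆ β ∈ {β : Fin n → ℝ | ∀ j, β j ∈ Set.Icc (-1 : ℝ) 1},
        ⨅ ε : Fin n → Bool,
          ⨆ i : Fin m, |∑ j, A i j * (β j - (if ε j then 1 else -1))|)
      ≤ 2 * ⨆ J : Finset (Fin n),
          ⨅ ε : Fin n → Bool,
            ⨆ i : Fin m, |∑ j ∈ J, A i j * (if ε j then (1 : ℝ) else -1)| := by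
  classical
  set D : ℝ := ⨆ J : Finset (Fin n), ⨅ ε : Fin n → Bool,
      ⨆ i : Fin m, |∑ j ∈ J, A i j * (if ε j then (1 : ℝ) else -1)| with hDdef
  have hnonneg : ∀ J : Finset (Fin n), 0 ≤ ⨅ ε : Fin n → Bool,
      ⨆ i : Fin m, |∑ j ∈ J, A i j * (if ε j then (1 : ℝ) else -1)| := by
    intro J
    refine le_ciInf fun ε => ?_
    rcases isEmpty_or_nonempty (Fin m) with h | h
    · rw [Real.iSup_of_isEmpty]
    · obtain ⟨i⟩ := h
      exact le_trans (abs_nonneg _)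
        (le_ciSup (f := fun i : Fin m => |∑ j ∈ J, A i j * (if ε j then (1:ℝ) else -1)|)
          (Set.Finite.bddAbove (Set.finite_range _)) i)
  have hD0 : 0 ≤ D :=
    le_trans (hnonneg ∅)
      (le_ciSup (f := fun J : Finset (Fin n) => ⨅ ε : Fin n → Bool,
          ⨆ i : Fin m, |∑ j ∈ J, A i j * (if ε j then (1:ℝ) else -1)|)
        (Set.Finite.bddAbove (Set.finite_range _)) ∅)
  have hD : ∀ J : Finset (Fin n), ∃ ε : Fin n → Bool,
      ∀ i, |∑ j ∈ J, A i j * sg (ε j)| ≤ D := by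
    intro J
    obtain ⟨ε₀, hε₀⟩ := Finite.exists_min
      (fun ε : Fin n → Bool => ⨆ i : Fin m, |∑ j ∈ J, A i j * sg (ε j)|)
    refine ⟨ε₀, fun i => ?_⟩
    have h1 : (⨆ i : Fin m, |∑ j ∈ J, A i j * sg (ε₀ j)|)
        ≤ ⨅ ε : Fin n → Bool, ⨆ i : Fin m, |∑ j ∈ J, A i j * (if ε j then (1:ℝ) else -1)| :=
      le_ciInf fun ε => by simpa [sg] using hε₀ ε
    have h2 : (⨅ ε : Fin n → Bool, ⨆ i : Fin m, |∑ j ∈ J, A i j * (if ε j then (1:ℝ) else -1)|)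
        ≤ D := le_ciSup (f := fun J : Finset (Fin n) => ⨅ ε : Fin n → Bool,
          ⨆ i : Fin m, |∑ j ∈ J, A i j * (if ε j then (1:ℝ) else -1)|)
        (Set.Finite.bddAbove (Set.finite_range _)) J
    exact le_trans
      (le_ciSup (f := fun i : Fin m => |∑ j ∈ J, A i j * sg (ε₀ j)|)
        (Set.Finite.bddAbove (Set.finite_range _)) i) (le_trans h1 h2)
  refine Real.iSup_le (fun β => ?_) (by positivity)
  refine Real.iSup_le (fun hβS => ?_) (by positivity)
  refine le_of_forall_pos_le_add fun δ hδ => ?_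
  set C : ℝ := 1 + ∑ i : Fin m, ∑ j : Fin n, |A i j| with hCdef
  have hC : 0 < C := by positivity
  have hrow : ∀ i : Fin m, (∑ j : Fin n, |A i j|) ≤ C := by
    intro i
    have h1 : (∑ j : Fin n, |A i j|) ≤ ∑ i : Fin m, ∑ j : Fin n, |A i j| :=
      Finset.single_le_sum (f := fun i : Fin m => ∑ j : Fin n, |A i j|)
        (fun i _ => Finset.sum_nonneg fun j _ => abs_nonneg _) (Finset.mem_univ i)
    linarith
  obtain ⟨k, hk⟩ := exists_pow_lt_of_lt_one (div_pos hδ hC) (by norm_num : (1/2:ℝ) < 1)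
  have hkC : C * (1/2:ℝ)^k < δ := by
    rw [lt_div_iff₀ hC] at hk; linarith
  have h2k : (0:ℝ) < 2^k := by positivity
  set γ : Fin n → ℝ := fun j => (⌊β j * 2^k⌋ : ℝ) / 2^k with hγ
  have hβj : ∀ j, -1 ≤ β j ∧ β j ≤ 1 := fun j => hβS j
  have habs : ∀ j, |γ j| ≤ 1 := by
    intro j
    rw [hγ, abs_le]
    constructor
    · rw [le_div_iff₀ h2k, neg_one_mul]
      have : ((-(2^k : ℤ) : ℤ) : ℝ) ≤ β j * 2^k := by
        push_cast
        nlinarith [(hβj j).1]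
      have h2 := (Int.le_floor).mpr this
      calc -(2:ℝ)^k = ((-(2^k:ℤ) : ℤ) : ℝ) := by push_cast; ring
        _ ≤ (⌊β j * 2^k⌋ : ℝ) := by exact_mod_cast h2
    · rw [div_le_one h2k]
      calc (⌊β j * 2^k⌋ : ℝ) ≤ β j * 2^k := Int.floor_le _
        _ ≤ 1 * 2^k := by nlinarith [(hβj j).2]
        _ = 2^k := one_mul _
  have hdy : ∀ j, ∃ t : ℤ, γ j * 2^k = t := by
    intro j
    exact ⟨⌊β j * 2^k⌋, by rw [hγ]; field_simp⟩
  have hclose : ∀ j, |β j - γ j| ≤ (1/2:ℝ)^k := by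
    intro j
    have h1 : β j - γ j = (β j * 2^k - ⌊β j * 2^k⌋) / 2^k := by
      rw [hγ]; field_simp
    rw [h1, abs_div, abs_of_pos h2k]
    have h2 : (0:ℝ) ≤ β j * 2^k - ⌊β j * 2^k⌋ := sub_nonneg.mpr (Int.floor_le _)
    have h3 : β j * 2^k - ⌊β j * 2^k⌋ ≤ 1 := by
      have := Int.lt_floor_add_one (β j * 2^k); linarith
    rw [abs_of_nonneg h2, div_le_iff₀ h2k]
    calc β j * 2^k - ⌊β j * 2^k⌋ ≤ 1 := h3
      _ = (1/2:ℝ)^k * 2^k := by rw [← mul_pow]; norm_num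
  obtain ⟨b, hb⟩ := key_lemma m n A D hD0 hD k γ habs hdy
  refine le_trans (ciInf_le (Set.Finite.bddBelow (Set.finite_range _)) b) ?_
  refine Real.iSup_le (fun i => ?_) (by positivity)
  have hbi := hb i
  simp only [sg] at hbi
  calc |∑ j, A i j * (β j - if b j then (1:ℝ) else -1)|
      = |∑ j, (A i j * (β j - γ j) + A i j * (γ j - if b j then (1:ℝ) else -1))| := by
        congr 1; exact Finset.sum_congr rfl fun j _ => by ring
    _ ≤ |∑ j, A i j * (β j - γ j)| + |∑ j, A i j * (γ j - if b j then (1:ℝ) else -1)| := by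
        rw [Finset.sum_add_distrib]; exact abs_add_le _ _
    _ ≤ δ + 2 * D := by
        gcongr
        · calc |∑ j, A i j * (β j - γ j)| ≤ ∑ j, |A i j * (β j - γ j)| :=
                Finset.abs_sum_le_sum_abs _ _
            _ ≤ ∑ j, |A i j| * (1/2:ℝ)^k := by
                refine Finset.sum_le_sum fun j _ => ?_
                rw [abs_mul]
                exact mul_le_mul_of_nonneg_left (hclose j) (abs_nonneg _)
            _ = (∑ j, |A i j|) * (1/2:ℝ)^k := by rw [Finset.sum_mul]
            _ ≤ C * (1/2:ℝ)^k := by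
                exact mul_le_mul_of_nonneg_right (hrow i) (by positivity)
            _ ≤ δ := le_of_lt hkC
        · calc |∑ j, A i j * (γ j - if b j then (1:ℝ) else -1)| ≤ (2 - (1/2:ℝ)^k) * D := hbi
            _ ≤ 2 * D := by nlinarith [pow_pos (by norm_num : (0:ℝ) < 1/2) k]
    _ = 2 * D + δ := by ring
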